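/- If S is an additively reduced semidomain and G a torsion-free abelian group, then the units of the group semidomain S[G] are exactly the monomials s·x^g with s a unit of S and g ∈ G. -/

import Mathlib

lemma twoUniqueSums_of_torsionFree {G : Type*} [AddCommGroup G]
    (htf : ∀ (g : G) (n : ℕ), n ≠ 0 → n • g = 0 → g = 0) : TwoUniqueSums G := by
  classical
  have hnz : NoZeroSMulDivisors ℤ G := by
    constructor
    intro n g hng
    by_cases hn : n = 0
    · exact Or.inl hn
    · refine Or.inr (htf g n.natAbs (Int.natAbs_ne_zero.mpr hn) ?_)
      have : (n.natAbs : ℤ) • g = 0 := by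
        rcases Int.natAbs_eq n with h | h
        · rw [← h, hng]
        · rw [h, neg_smul, neg_eq_zero] at hng
          exact hng
      simpa using this
  constructor
  intro A B hc
  set s : Finset G := A ∪ B with hs
  set H := AddSubgroup.closure (s : Set G) with hH
  haveI : AddGroup.FG H := AddGroup.closure_finset_fg s
  haveI : Module.Finite ℤ H := Module.Finite.iff_addGroup_fg.mpr ‹_›
  haveI : NoZeroSMulDivisors ℤ H := by
    constructor
    intro n x hnx
    by_cases hn : n = 0
    · exact Or.inl hn
    · refine Or.inr ?_
      have : n • (x : G) = 0 := by
        have := congrArg (Subtype.val) hnx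
        simpa using this
      rcases hnz.eq_zero_or_eq_zero_of_smul_eq_zero this with h | h
      · exact absurd h hn
      · exact Subtype.ext h
  haveI : Module.Free ℤ H := Module.free_of_finite_type_torsion_free'
  haveI : TwoUniqueSums H := by
    let b := Module.Free.chooseBasis ℤ H
    exact TwoUniqueSums.of_injective_addHom
      b.repr.toLinearMap.toAddMonoidHom.toAddHom b.repr.injective inferInstance
  have hAH : ∀ a ∈ A, a ∈ H := fun a ha =>
    AddSubgroup.subset_closure (by simp [hs, ha])
  have hBH : ∀ b ∈ B, b ∈ H := fun b hb =>
    AddSubgroup.subset_closure (by simp [hs, hb])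
  let A' : Finset H := A.subtype (· ∈ H)
  let B' : Finset H := B.subtype (· ∈ H)
  have hcardA : A'.card = A.card := by
    rw [Finset.card_subtype, Finset.filter_true_of_mem hAH]
  have hcardB : B'.card = B.card := by
    rw [Finset.card_subtype, Finset.filter_true_of_mem hBH]
  have hc' : 1 < A'.card * B'.card := by rw [hcardA, hcardB]; exact hc
  obtain ⟨p1, hp1, p2, hp2, hne, hu1, hu2⟩ := TwoUniqueSums.uniqueAdd_of_one_lt_card hc'
  rw [Finset.mem_product] at hp1 hp2
  have key : ∀ (p : H × H), p.1 ∈ A' → p.2 ∈ B' → UniqueAdd A' B' p.1 p.2 →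
      UniqueAdd A B (p.1 : G) (p.2 : G) := by
    intro p hpa hpb hu a b ha hb he
    have ha' : (⟨a, hAH a ha⟩ : H) ∈ A' := Finset.mem_subtype.mpr ha
    have hb' : (⟨b, hBH b hb⟩ : H) ∈ B' := Finset.mem_subtype.mpr hb
    have : (⟨a, hAH a ha⟩ : H) + ⟨b, hBH b hb⟩ = p.1 + p.2 := Subtype.ext he
    obtain ⟨h1, h2⟩ := hu ha' hb' this
    exact ⟨congrArg Subtype.val h1, congrArg Subtype.val h2⟩
  refine ⟨((p1.1 : G), (p1.2 : G)), ?_, ((p2.1 : G), (p2.2 : G)), ?_, ?_, ?_, ?_⟩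
  · exact Finset.mk_mem_product (Finset.mem_subtype.mp hp1.1) (Finset.mem_subtype.mp hp1.2)
  · exact Finset.mk_mem_product (Finset.mem_subtype.mp hp2.1) (Finset.mem_subtype.mp hp2.2)
  · intro h
    apply hne
    rw [Prod.mk.injEq] at h
    exact Prod.ext (Subtype.ext h.1) (Subtype.ext h.2)
  · exact key p1 hp1.1 hp1.2 hu1
  · exact key p2 hp2.1 hp2.2 hu2

/-- Witness that `S` is a semidomain: an injective semiring hom into an integral domain. -/
structure SemidomainWitness (S : Type*) [CommSemiring S] where
  D : Type
  [commRing : CommRing D]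
  [isDomain : IsDomain D]
  emb : S →+* D
  inj : Function.Injective emb

/-- `S` is a semidomain, i.e. (isomorphic to) a subsemiring of an integral domain. -/
def IsSemidomain (S : Type*) [CommSemiring S] : Prop := Nonempty (SemidomainWitness S)

/-- `S` is additively reduced: `0` is the only additively invertible element. -/
def AddReduced (S : Type*) [AddZeroClass S] : Prop := ∀ a b : S, a + b = 0 → a = 0

/-- `s` is an atom of the additive monoid `(S, +)` (for `S` additively reduced):
it is nonzero and cannot be written as a sum of two nonzero elements. -/
def IsAddAtom {S : Type*} [AddZeroClass S] (s : S) : Prop :=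
  s ≠ 0 ∧ ∀ a b : S, s = a + b → a = 0 ∨ b = 0

/-- `S` is additively Furstenberg: every nonzero element is divisible in `(S, +)`
by an additive atom. -/
def AddFurstenberg (S : Type*) [AddZeroClass S] : Prop :=
  ∀ s : S, s ≠ 0 → ∃ a t : S, IsAddAtom a ∧ s = a + t

/-- The units of the group semidomain `S[G]`, for `S` an additively reduced semidomain and
`G` a torsion-free abelian group, are exactly the monomials `s·x^g` with `s` a unit of `S`. -/
theorem units_of_group_semidomain {S : Type*} [CommSemiring S] {G : Type*} [AddCommGroup G]
    (hS : IsSemidomain S) (hred : AddReduced S)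
    (htf : ∀ (g : G) (n : ℕ), n ≠ 0 → n • g = 0 → g = 0)
    (f : AddMonoidAlgebra S G) :
    IsUnit f ↔ ∃ (s : S) (g : G), IsUnit s ∧ f = AddMonoidAlgebra.single g s := by
  classical
  haveI : TwoUniqueSums G := twoUniqueSums_of_torsionFree htf
  constructor
  · intro hu
    rcases subsingleton_or_nontrivial S with hsub | hnt
    · refine ⟨1, 0, isUnit_one, AddMonoidAlgebra.ext (Finsupp.ext fun a => Subsingleton.elim _ _)⟩
    · obtain ⟨u, rfl⟩ := hu
      set f := (u : AddMonoidAlgebra S G) with hfdef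
      set h := ((u⁻¹ : (AddMonoidAlgebra S G)ˣ) : AddMonoidAlgebra S G) with hhdef
      have hfh : f * h = 1 := u.mul_inv
      obtain ⟨W⟩ := hS
      letI := W.commRing
      haveI := W.isDomain
      have embne : ∀ x : S, x ≠ 0 → W.emb x ≠ 0 := fun x hx h0 =>
        hx (W.inj (by simpa using h0))
      have one_apply : ∀ a : G, a ≠ 0 → (1 : AddMonoidAlgebra S G).coeff a = 0 := by
        intro a ha
        rw [AddMonoidAlgebra.one_def]
        exact Finsupp.single_eq_of_ne ha
      have hf0 : f ≠ 0 := by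
        intro h0
        have h1 : (1 : AddMonoidAlgebra S G) = 0 := by rw [← hfh, h0, zero_mul]
        have := congrArg (fun p : AddMonoidAlgebra S G => p.coeff (0 : G)) h1
        simp [AddMonoidAlgebra.one_def] at this
      have hh0 : h ≠ 0 := by
        intro h0
        have h1 : (1 : AddMonoidAlgebra S G) = 0 := by rw [← hfh, h0, mul_zero]
        have := congrArg (fun p : AddMonoidAlgebra S G => p.coeff (0 : G)) h1
        simp [AddMonoidAlgebra.one_def] at this
      by_cases hcard : 1 < f.coeff.support.card * h.coeff.support.card
      · exfalso
        obtain ⟨p1, hp1, p2, hp2, hne, hu1, hu2⟩ := TwoUniqueSums.uniqueAdd_of_one_lt_card hcard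
        rw [Finset.mem_product] at hp1 hp2
        have sum_eq_zero : ∀ (p : G × G), p.1 ∈ f.coeff.support → p.2 ∈ h.coeff.support →
            UniqueAdd f.coeff.support h.coeff.support p.1 p.2 → p.1 + p.2 = 0 := by
          intro p hpa hpb hup
          have c1 : (f * h).coeff (p.1 + p.2) = f.coeff p.1 * h.coeff p.2 :=
            AddMonoidAlgebra.coeff_mul_add_of_uniqueAdd hup
          have n1 : f.coeff p.1 * h.coeff p.2 ≠ 0 := by
            intro h0
            have h0' := congrArg W.emb h0
            rw [map_mul, map_zero] at h0'
            rcases mul_eq_zero.mp h0' with hx | hx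
            · exact embne _ (Finsupp.mem_support_iff.mp hpa) hx
            · exact embne _ (Finsupp.mem_support_iff.mp hpb) hx
          by_contra hxne
          exact n1 (by rw [← c1, hfh, one_apply _ hxne])
        have e1 := sum_eq_zero p1 hp1.1 hp1.2 hu1
        have e2 := sum_eq_zero p2 hp2.1 hp2.2 hu2
        obtain ⟨h1, h2⟩ := hu1 hp2.1 hp2.2 (by rw [e1, e2])
        exact hne (Prod.ext h1 h2).symm
      · push_neg at hcard
        have hfpos : 1 ≤ f.coeff.support.card :=
          Finset.card_pos.mpr (Finsupp.support_nonempty_iff.mpr (mt AddMonoidAlgebra.coeff_eq_zero.mp hf0))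
        have hhpos : 1 ≤ h.coeff.support.card :=
          Finset.card_pos.mpr (Finsupp.support_nonempty_iff.mpr (mt AddMonoidAlgebra.coeff_eq_zero.mp hh0))
        have hA : f.coeff.support.card = 1 := by
          refine le_antisymm ?_ hfpos
          calc f.coeff.support.card = f.coeff.support.card * 1 := (mul_one _).symm
            _ ≤ f.coeff.support.card * h.coeff.support.card := Nat.mul_le_mul_left _ hhpos
            _ ≤ 1 := hcard
        have hB : h.coeff.support.card = 1 := by
          refine le_antisymm ?_ hhpos
          calc h.coeff.support.card = 1 * h.coeff.support.card := (one_mul _).symm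
            _ ≤ f.coeff.support.card * h.coeff.support.card := Nat.mul_le_mul_right _ hfpos
            _ ≤ 1 := hcard
        obtain ⟨g, s, hs0, hfs⟩ := Finsupp.card_support_eq_one'.mp hA
        obtain ⟨g', t, ht0, hhs⟩ := Finsupp.card_support_eq_one'.mp hB
        replace hfs : f = AddMonoidAlgebra.single g s := AddMonoidAlgebra.coeff_injective (by exact hfs)
        replace hhs : h = AddMonoidAlgebra.single g' t := AddMonoidAlgebra.coeff_injective (by exact hhs)
        refine ⟨s, g, ?_, hfs⟩
        have hsingle0 : (AddMonoidAlgebra.single g s) * (AddMonoidAlgebra.single g' t)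
            = (1 : AddMonoidAlgebra S G) := by
          rw [show AddMonoidAlgebra.single g s = f from hfs.symm,
            show AddMonoidAlgebra.single g' t = h from hhs.symm]
          exact hfh
        rw [AddMonoidAlgebra.single_mul_single, AddMonoidAlgebra.one_def] at hsingle0
        have hsingle := hsingle0
        rcases AddMonoidAlgebra.single_inj.mp hsingle with ⟨_, hst⟩ | ⟨_, h1⟩
        · exact IsUnit.of_mul_eq_one t hst
        · exact absurd h1 one_ne_zero
  · rintro ⟨s, g, hsu, rfl⟩
    obtain ⟨v, hv⟩ := hsu
    refine IsUnit.of_mul_eq_one (AddMonoidAlgebra.single (-g) ((v⁻¹ : Sˣ) : S)) ?_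
    rw [AddMonoidAlgebra.single_mul_single, add_neg_cancel, ← hv, Units.mul_inv,
      AddMonoidAlgebra.one_def]
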